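/- Let G be a simple connected graph and S_q(G) its q-subdivision graph. For any two old nodes i, j ∈ V(G), the hitting time of the simple random walk on S_q(G) satisfies T̂_{ij} = 4 T_{ij}, where T_{ij} is the hitting time in G. -/

import Mathlib

open Finset

variable {V : Type*}

/-- Normalized adjacency matrix `P = D^{-1/2} A D^{-1/2}`. -/
noncomputable def normAdj [Fintype V] (G : SimpleGraph V) [DecidableRel G.Adj] :
    Matrix V V ℝ :=
  Matrix.of fun i j =>
    if G.Adj i j then 1 / Real.sqrt ((G.degree i : ℝ) * (G.degree j : ℝ)) else 0

lemma normAdj_isHermitian [Fintype V] (G : SimpleGraph V) [DecidableRel G.Adj] :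
    (normAdj G).IsHermitian := by
  ext i j
  simp only [Matrix.conjTranspose_apply, normAdj, Matrix.of_apply, star_trivial]
  by_cases h : G.Adj i j
  · rw [if_pos h, if_pos ((G.adj_comm i j).mp h), mul_comm]
  · rw [if_neg h, if_neg (fun h' => h ((G.adj_comm j i).mp h'))]

/-- `μ` is an eigenvalue of `M`. -/
def IsEigenvalue {W : Type*} [Fintype W] (M : Matrix W W ℝ) (μ : ℝ) : Prop :=
  ∃ v : W → ℝ, v ≠ 0 ∧ M.mulVec v = μ • v

/-- Multiplicity of `μ` as an eigenvalue of `M` (dimension of the eigenspace). -/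
noncomputable def eigMult {W : Type*} [Fintype W] [DecidableEq W]
    (M : Matrix W W ℝ) (μ : ℝ) : ℕ :=
  Module.finrank ℝ (LinearMap.ker (Matrix.toLin' (M - μ • (1 : Matrix W W ℝ))))

/-- `r` is the effective-resistance function of `G`: `r i j = φ i - φ j` where
`L φ = e_i - e_j`. -/
def IsEffRes [Fintype V] [DecidableEq V] (G : SimpleGraph V) [DecidableRel G.Adj]
    (r : V → V → ℝ) : Prop :=
  ∀ i j : V, ∃ φ : V → ℝ,
    (G.lapMatrix ℝ).mulVec φ =
      (fun k => (if k = i then (1 : ℝ) else 0) - (if k = j then (1 : ℝ) else 0)) ∧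
    r i j = φ i - φ j

/-- `T` is the expected-hitting-time function of the simple random walk on `G`. -/
def IsHitting [Fintype V] (G : SimpleGraph V) [DecidableRel G.Adj] (T : V → V → ℝ) : Prop :=
  (∀ j, T j j = 0) ∧
  ∀ i j : V, i ≠ j → T i j = 1 + (∑ k ∈ G.neighborFinset i, T k j) / (G.degree i : ℝ)

/-- Kemeny constant `∑_{λ eigenvalue ≠ 1} 1/(1-λ)` of the random walk on `G`. -/
noncomputable def kemeny [Fintype V] [DecidableEq V] (G : SimpleGraph V) [DecidableRel G.Adj]
    (hP : (normAdj G).IsHermitian) : ℝ :=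
  ∑ i, if hP.eigenvalues i = 1 then 0 else 1 / (1 - hP.eigenvalues i)

/-- Kirchhoff index. -/
noncomputable def kirchhoff [Fintype V] (r : V → V → ℝ) : ℝ :=
  (∑ i, ∑ j, r i j) / 2

/-- Additive degree-Kirchhoff index. -/
noncomputable def addKirchhoff [Fintype V] (G : SimpleGraph V) [DecidableRel G.Adj]
    (r : V → V → ℝ) : ℝ :=
  (∑ i, ∑ j, ((G.degree i : ℝ) + (G.degree j : ℝ)) * r i j) / 2

/-- Multiplicative degree-Kirchhoff index. -/
noncomputable def mulKirchhoff [Fintype V] (G : SimpleGraph V) [DecidableRel G.Adj]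
    (r : V → V → ℝ) : ℝ :=
  (∑ i, ∑ j, (G.degree i : ℝ) * (G.degree j : ℝ) * r i j) / 2

/-- The adjacency relation of the q-subdivision graph. -/
def qSubAdj (G : SimpleGraph V) (q : ℕ) :
    (V ⊕ (G.edgeSet × Fin q)) → (V ⊕ (G.edgeSet × Fin q)) → Prop
  | Sum.inl u, Sum.inr p => u ∈ (p.1 : Sym2 V)
  | Sum.inr p, Sum.inl u => u ∈ (p.1 : Sym2 V)
  | _, _ => False

/-- The q-subdivision graph `S_q(G)`: every edge `uv` of `G` is replaced by `q`
disjoint paths of length 2. -/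
def qSubdivision (G : SimpleGraph V) (q : ℕ) :
    SimpleGraph (V ⊕ (G.edgeSet × Fin q)) where
  Adj := qSubAdj G q
  symm := by
    constructor
    intro a b h
    cases a <;> cases b <;> simp_all [qSubAdj]
  loopless := by
    constructor
    intro a h
    cases a <;> simp_all [qSubAdj]

noncomputable instance (G : SimpleGraph V) (q : ℕ) :
    DecidableRel (qSubdivision G q).Adj := Classical.decRel _

noncomputable instance [Fintype V] (G : SimpleGraph V) : Fintype G.edgeSet :=
  Fintype.ofFinite _

set_option linter.unusedSectionVars false

section Aux
variable [Fintype V] [DecidableEq V] (G : SimpleGraph V) [DecidableRel G.Adj]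

lemma aux_deg_pos (hconn : G.Connected) {i j : V} (hij : i ≠ j) : 0 < G.degree i := by
  rw [G.degree_pos_iff_exists_adj]
  obtain ⟨w⟩ := hconn.preconnected i j
  cases w with
  | nil => exact absurd rfl hij
  | cons h p => exact ⟨_, h⟩

lemma aux_harmonic_le (hconn : G.Connected) (j : V) (D : V → ℝ) (hDj : D j = 0)
    (hD : ∀ i, i ≠ j → D i * (G.degree i : ℝ) = ∑ k ∈ G.neighborFinset i, D k) :
    ∀ i, D i ≤ 0 := by
  obtain ⟨i0, -, hi0⟩ := Finset.exists_max_image (univ : Finset V) D ⟨j, mem_univ j⟩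
  set M := D i0 with hM
  have hle : ∀ i, D i ≤ M := fun i => hi0 i (mem_univ i)
  have step : ∀ i, D i = M → i ≠ j → ∀ k ∈ G.neighborFinset i, D k = M := by
    intro i hi hij k hk
    have hdeg : 0 < G.degree i := aux_deg_pos G hconn hij
    have h1 : ∑ l ∈ G.neighborFinset i, (M - D l) = 0 := by
      rw [Finset.sum_sub_distrib, Finset.sum_const, G.card_neighborFinset_eq_degree,
        ← hD i hij, hi, nsmul_eq_mul]
      ring
    have h2 := (Finset.sum_eq_zero_iff_of_nonneg
      (fun l _ => by linarith [hle l])).mp h1 k hk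
    linarith
  have key : ∀ (a b : V) (w : G.Walk a b), D a = M → D b = M ∨ D j = M := by
    intro a b w
    induction w with
    | nil => exact fun h => Or.inl h
    | @cons a' b' c' h p ih =>
      intro ha
      by_cases haj : a' = j
      · exact Or.inr (haj ▸ ha)
      · exact ih (step _ ha haj _ (by rwa [SimpleGraph.mem_neighborFinset]))
  have hMj : D j = M := by
    obtain ⟨w⟩ := hconn.preconnected i0 j
    rcases key i0 j w rfl with h | h <;> exact h
  intro i
  calc D i ≤ M := hle i
  _ = 0 := by rw [← hMj, hDj]

lemma aux_unique (hconn : G.Connected) (j : V) (U T : V → ℝ)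
    (hUj : U j = 0) (hTj : T j = 0)
    (hU : ∀ i, i ≠ j → U i = 1 + (∑ k ∈ G.neighborFinset i, U k) / (G.degree i : ℝ))
    (hT : ∀ i, i ≠ j → T i = 1 + (∑ k ∈ G.neighborFinset i, T k) / (G.degree i : ℝ)) :
    ∀ i, U i = T i := by
  have main : ∀ (X Y : V → ℝ), X j = 0 → Y j = 0 →
      (∀ i, i ≠ j → X i = 1 + (∑ k ∈ G.neighborFinset i, X k) / (G.degree i : ℝ)) →
      (∀ i, i ≠ j → Y i = 1 + (∑ k ∈ G.neighborFinset i, Y k) / (G.degree i : ℝ)) →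
      ∀ i, X i ≤ Y i := by
    intro X Y hXj hYj hX hY
    have h := aux_harmonic_le G hconn j (fun i => X i - Y i) (by simp [hXj, hYj]) ?_
    · intro i; have := h i; linarith
    · intro i hij
      have hd : (0:ℝ) < (G.degree i : ℝ) := by
        exact_mod_cast aux_deg_pos G hconn hij
      have h1 := hX i hij
      have h2 := hY i hij
      rw [Finset.sum_sub_distrib]
      field_simp at h1 h2
      ring_nf
      ring_nf at h1 h2
      linarith
  intro i
  exact le_antisymm (main U T hUj hTj hU hT i) (main T U hTj hUj hT hU i)
end Aux


section Aux2
variable [Fintype V] [DecidableEq V] (G : SimpleGraph V) [DecidableRel G.Adj]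

/-- Sum of `f` over the two members of a Sym2. -/
noncomputable def edgeSum (f : V → ℝ) (e : Sym2 V) : ℝ := ∑ u : V, if u ∈ e then f u else 0

lemma edgeSum_mk (f : V → ℝ) {u v : V} (huv : u ≠ v) :
    edgeSum f s(u, v) = f u + f v := by
  unfold edgeSum
  rw [← Finset.sum_filter]
  have : (univ.filter (· ∈ s(u, v))) = {u, v} := by
    ext x
    simp [Sym2.mem_iff]
  rw [this, Finset.sum_pair huv]

lemma aux_sum_edges (i : V) (g : Sym2 V → ℝ) :
    ∑ e : G.edgeSet, (if i ∈ (e : Sym2 V) then g (e : Sym2 V) else 0)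
      = ∑ k ∈ G.neighborFinset i, g s(i, k) := by
  rw [← Finset.sum_filter]
  refine Finset.sum_bij' (fun e he => Sym2.Mem.other' (Finset.mem_filter.mp he).2)
    (fun k hk => ⟨s(i, k), (G.mem_edgeSet).mpr ((SimpleGraph.mem_neighborFinset _ _ _).mp hk)⟩)
    ?_ ?_ ?_ ?_ ?_
  · intro e he
    have h2 := (Finset.mem_filter.mp he).2
    rw [SimpleGraph.mem_neighborFinset, ← G.mem_edgeSet]
    rw [Sym2.other_spec' h2]
    exact e.2
  · intro k hk
    simp [Sym2.mem_iff]
  · intro e he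
    apply Subtype.ext
    exact Sym2.other_spec' (Finset.mem_filter.mp he).2
  · intro k hk
    have h : s(i, Sym2.Mem.other' (by simp : i ∈ s(i,k))) = s(i, k) :=
      Sym2.other_spec' _
    exact (Sym2.congr_right.mp h)
  · intro e he
    congr 1
    exact (Sym2.other_spec' (Finset.mem_filter.mp he).2).symm

end Aux2

section Aux3
variable [Fintype V] [DecidableEq V] (G : SimpleGraph V) [DecidableRel G.Adj] (q : ℕ)

lemma qsub_adj_inl_inl (i u : V) : ¬ (qSubdivision G q).Adj (Sum.inl i) (Sum.inl u) := by
  simp [qSubdivision, qSubAdj]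

lemma qsub_adj_inl_inr (i : V) (p : G.edgeSet × Fin q) :
    (qSubdivision G q).Adj (Sum.inl i) (Sum.inr p) ↔ i ∈ (p.1 : Sym2 V) := by
  simp [qSubdivision, qSubAdj]

lemma qsub_adj_inr_inl (p : G.edgeSet × Fin q) (u : V) :
    (qSubdivision G q).Adj (Sum.inr p) (Sum.inl u) ↔ u ∈ (p.1 : Sym2 V) := by
  simp [qSubdivision, qSubAdj]

lemma qsub_adj_inr_inr (p p' : G.edgeSet × Fin q) :
    ¬ (qSubdivision G q).Adj (Sum.inr p) (Sum.inr p') := by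
  simp [qSubdivision, qSubAdj]

lemma qsub_sum_inl (i : V) (f : (V ⊕ (G.edgeSet × Fin q)) → ℝ) :
    ∑ k ∈ (qSubdivision G q).neighborFinset (Sum.inl i), f k
      = ∑ e : G.edgeSet, ∑ m : Fin q, if i ∈ (e : Sym2 V) then f (Sum.inr (e, m)) else 0 := by
  rw [SimpleGraph.neighborFinset_eq_filter, Finset.sum_filter, Fintype.sum_sum_type]
  rw [Fintype.sum_prod_type]
  have h1 : ∑ u : V, (if (qSubdivision G q).Adj (Sum.inl i) (Sum.inl u) then f (Sum.inl u) else 0) = 0 :=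
    Finset.sum_eq_zero fun u _ => if_neg (qsub_adj_inl_inl G q i u)
  rw [h1, zero_add]
  exact Finset.sum_congr rfl fun e _ => Finset.sum_congr rfl fun m _ =>
    if_congr (qsub_adj_inl_inr G q i (e, m)) rfl rfl

lemma qsub_sum_inr (p : G.edgeSet × Fin q) (f : (V ⊕ (G.edgeSet × Fin q)) → ℝ) :
    ∑ k ∈ (qSubdivision G q).neighborFinset (Sum.inr p), f k
      = ∑ u : V, if u ∈ (p.1 : Sym2 V) then f (Sum.inl u) else 0 := by
  rw [SimpleGraph.neighborFinset_eq_filter, Finset.sum_filter, Fintype.sum_sum_type]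
  have h2 : ∑ p' : G.edgeSet × Fin q,
      (if (qSubdivision G q).Adj (Sum.inr p) (Sum.inr p') then f (Sum.inr p') else 0) = 0 :=
    Finset.sum_eq_zero fun p' _ => if_neg (qsub_adj_inr_inr G q p p')
  rw [h2, add_zero]
  exact Finset.sum_congr rfl fun u _ => if_congr (qsub_adj_inr_inl G q p u) rfl rfl

lemma qsub_deg_inl (i : V) :
    (((qSubdivision G q).degree (Sum.inl i) : ℝ)) = q * (G.degree i : ℝ) := by
  have h : ((qSubdivision G q).degree (Sum.inl i) : ℝ)
      = ∑ k ∈ (qSubdivision G q).neighborFinset (Sum.inl i), (1 : ℝ) := by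
    rw [Finset.sum_const, nsmul_eq_mul, mul_one, SimpleGraph.card_neighborFinset_eq_degree]
  rw [h, qsub_sum_inl]
  have h2 : ∀ e : G.edgeSet, ∑ m : Fin q, (if i ∈ (e : Sym2 V) then (1:ℝ) else 0)
      = (q : ℝ) * (if i ∈ (e : Sym2 V) then (1:ℝ) else 0) := fun e => by
    rw [Finset.sum_const, Finset.card_univ, Fintype.card_fin, nsmul_eq_mul]
  rw [Finset.sum_congr rfl fun e _ => h2 e, ← Finset.mul_sum]
  congr 1
  have := aux_sum_edges G i (fun _ => (1:ℝ))
  rw [this, Finset.sum_const, nsmul_eq_mul, mul_one, SimpleGraph.card_neighborFinset_eq_degree]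

lemma aux_two (e : Sym2 V) (he : ¬ e.IsDiag) :
    ∑ u : V, (if u ∈ e then (1:ℝ) else 0) = 2 := by
  induction e using Sym2.ind with
  | _ u v =>
    have hne : u ≠ v := fun h => he (by simp [h])
    have h2 := edgeSum_mk (fun _ : V => (1:ℝ)) hne
    unfold edgeSum at h2
    rw [h2]; norm_num

lemma qsub_deg_inr (p : G.edgeSet × Fin q) :
    (((qSubdivision G q).degree (Sum.inr p) : ℝ)) = 2 := by
  have h : ((qSubdivision G q).degree (Sum.inr p) : ℝ)
      = ∑ k ∈ (qSubdivision G q).neighborFinset (Sum.inr p), (1 : ℝ) := by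
    rw [Finset.sum_const, nsmul_eq_mul, mul_one, SimpleGraph.card_neighborFinset_eq_degree]
  rw [h, qsub_sum_inr]
  exact aux_two (p.1 : Sym2 V) (G.not_isDiag_of_mem_edgeSet p.1.2)

end Aux3

/-- for old nodes `i, j`, hitting times satisfy `T̂_{ij} = 4 T_{ij}`. -/
theorem stmt10 [Fintype V] [DecidableEq V] (G : SimpleGraph V) [DecidableRel G.Adj]
    (hconn : G.Connected) (q : ℕ) (hq : 0 < q)
    (T : V → V → ℝ) (T' : (V ⊕ (G.edgeSet × Fin q)) → (V ⊕ (G.edgeSet × Fin q)) → ℝ)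
    (hT : IsHitting G T) (hT' : IsHitting (qSubdivision G q) T') (i j : V) :
    T' (Sum.inl i) (Sum.inl j) = 4 * T i j := by
  classical
  by_cases hij : i = j
  · subst hij; rw [hT.1, hT'.1, mul_zero]
  · set A : V → ℝ := fun k => T' (Sum.inl k) (Sum.inl j) with hAdef
    have hAj : A j = 0 := hT'.1 (Sum.inl j)
    have hB : ∀ (e : G.edgeSet) (m : Fin q),
        T' (Sum.inr (e, m)) (Sum.inl j) = 1 + (edgeSum A (e : Sym2 V)) / 2 := by
      intro e m
      have h2 := hT'.2 (Sum.inr (e, m)) (Sum.inl j) (by simp)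
      rw [qsub_sum_inr, qsub_deg_inr] at h2
      exact h2
    have hAeq : ∀ k, k ≠ j →
        A k = 4 + (∑ l ∈ G.neighborFinset k, A l) / (G.degree k : ℝ) := by
      intro k hk
      have hd : (0:ℝ) < (G.degree k : ℝ) := by exact_mod_cast aux_deg_pos G hconn hk
      have hq' : (0:ℝ) < (q:ℝ) := by exact_mod_cast hq
      have h1 := hT'.2 (Sum.inl k) (Sum.inl j) (by simp [hk])
      rw [qsub_sum_inl, qsub_deg_inl] at h1
      simp only [hB] at h1
      have h3 : ∀ e : G.edgeSet,
          (∑ _m : Fin q, (if k ∈ (e : Sym2 V) then 1 + edgeSum A (e : Sym2 V) / 2 else 0))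
            = (q:ℝ) * (if k ∈ (e : Sym2 V) then 1 + edgeSum A (e : Sym2 V) / 2 else 0) :=
        fun e => by
          rw [Finset.sum_const, Finset.card_univ, Fintype.card_fin, nsmul_eq_mul]
      rw [Finset.sum_congr rfl fun e _ => h3 e, ← Finset.mul_sum] at h1
      rw [aux_sum_edges G k (fun e => 1 + edgeSum A e / 2)] at h1
      set S := ∑ l ∈ G.neighborFinset k, A l with hS
      set d := (G.degree k : ℝ) with hdd
      have h4 : ∑ l ∈ G.neighborFinset k, (1 + edgeSum A s(k, l) / 2)
          = d + (d * A k + S) / 2 := by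
        rw [Finset.sum_congr rfl (fun l hl => by
          rw [edgeSum_mk A (((SimpleGraph.mem_neighborFinset _ _ _).mp hl).ne)])]
        rw [Finset.sum_add_distrib, Finset.sum_const, nsmul_eq_mul, mul_one,
          SimpleGraph.card_neighborFinset_eq_degree, ← Finset.sum_div,
          Finset.sum_add_distrib, Finset.sum_const, nsmul_eq_mul,
          SimpleGraph.card_neighborFinset_eq_degree]
      rw [h4] at h1
      have h5 : ((q:ℝ) * (d + (d * A k + S) / 2)) / ((q:ℝ) * d)
          = 1 + A k / 2 + S / d / 2 := by
        field_simp
        ring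
      rw [h5] at h1
      linarith
    set U : V → ℝ := fun k => A k / 4 with hUdef
    have hUj : U j = 0 := by simp [hUdef, hAj]
    have hU : ∀ k, k ≠ j →
        U k = 1 + (∑ l ∈ G.neighborFinset k, U l) / (G.degree k : ℝ) := by
      intro k hk
      simp only [hUdef]
      rw [hAeq k hk, ← Finset.sum_div]
      ring
    have huniq := aux_unique G hconn j U (fun k => T k j) hUj (hT.1 j) hU
      (fun k hk => hT.2 k j hk) i
    have hfin : A i / 4 = T i j := huniq
    have hAi : A i = T' (Sum.inl i) (Sum.inl j) := rfl
    linarith [hfin]
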